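/- Let p be a prime, f ≥ 1, and (a_0,...,a_{f-1}) ∈ {1,...,p}^f not all equal to p, with n_i = Σ_{j=1}^{f} a_{i+j} p^{f-j}. If n_t ≡ n_u (mod p^f − 1) for distinct t, u ∈ {0,...,f-1}, then the cyclic shift of (a_0,...,a_{f-1}) by t − u equals the original tuple; i.e., the tuple has nontrivial stabilizer under cyclic rotation. -/
import Mathlib

private lemma digits_unique (p : ℤ) (hp : 0 < p) :
    ∀ f : ℕ, ∀ d : ℕ → ℤ, (∀ e, |d e| < p) →
      (∑ e ∈ Finset.range f, d e * p ^ e) = 0 → ∀ e < f, d e = 0 := by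
  intro f
  induction f with
  | zero => intro d _ _ e he; omega
  | succ f ih =>
    intro d hd hsum e he
    rw [Finset.sum_range_succ' (fun e => d e * p ^ e) f] at hsum
    have hdvd : p ∣ d 0 := by
      have h1 : p ∣ ∑ e ∈ Finset.range f, d (e + 1) * p ^ (e + 1) :=
        Finset.dvd_sum fun i _ => Dvd.intro (d (i + 1) * p ^ i) (by ring)
      have h2 : d 0 = -(∑ e ∈ Finset.range f, d (e + 1) * p ^ (e + 1)) := by
        simp only [pow_zero, mul_one] at hsum; linarith
      rw [h2]; exact dvd_neg.2 h1
    have h0 : d 0 = 0 := Int.eq_zero_of_abs_lt_dvd hdvd (hd 0)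
    have hsum' : ∑ e ∈ Finset.range f, d (e + 1) * p ^ e = 0 := by
      have hm : p * ∑ e ∈ Finset.range f, d (e + 1) * p ^ e = 0 := by
        rw [Finset.mul_sum]
        rw [h0] at hsum
        simp only [zero_mul, add_zero] at hsum
        rw [← hsum]
        exact Finset.sum_congr rfl fun i _ => by ring
      rcases mul_eq_zero.1 hm with h | h
      · exact absurd h hp.ne'
      · exact h
    rcases Nat.eq_zero_or_pos e with rfl | hpos
    · exact h0
    · obtain ⟨e', rfl⟩ := Nat.exists_eq_succ_of_ne_zero hpos.ne'
      exact ih (fun e => d (e + 1)) (fun e => hd (e + 1)) hsum' e' (by omega)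

/-- Let `p` be a prime, `f ≥ 1`, and `(a 0, …, a (f-1)) ∈ {1,…,p}^f`
not all equal to `p`, with `n i = ∑_{j=1}^{f} a (i+j) * p^(f-j)` (indices mod `f`).
If `n t ≡ n u (mod p^f − 1)` for distinct `t, u`, then the cyclic shift of `a`
by `t − u` equals `a`; i.e. `a` has nontrivial stabilizer under cyclic rotation. -/
theorem stmt_3 (p f : ℕ) (hp : p.Prime) (hf : 0 < f)
    (a : ZMod f → ℤ) (ha : ∀ i, 1 ≤ a i ∧ a i ≤ (p : ℤ)) (hnp : ¬ ∀ i, a i = (p : ℤ))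
    (n : ZMod f → ℤ)
    (hn : ∀ i, n i = ∑ j : Fin f, a (i + ((j : ℕ) : ZMod f) + 1) * (p : ℤ) ^ (f - 1 - (j : ℕ)))
    (t u : ZMod f) (htu : t ≠ u)
    (hcong : ((p : ℤ) ^ f - 1) ∣ (n t - n u)) :
    ∀ i : ZMod f, a (i + (t - u)) = a i := by
  haveI : NeZero f := ⟨hf.ne'⟩
  obtain ⟨i0, hi0⟩ := not_forall.1 hnp
  have hp2 : (2 : ℤ) ≤ (p : ℤ) := by exact_mod_cast hp.two_le
  set c : ℕ → ℤ := fun j => a (t + (j : ZMod f) + 1) - a (u + (j : ZMod f) + 1) with hc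
  have hsum : n t - n u = ∑ j ∈ Finset.range f, c j * (p : ℤ) ^ (f - 1 - j) := by
    rw [hn t, hn u, ← Finset.sum_sub_distrib,
      ← Fin.sum_univ_eq_sum_range (fun j => c j * (p : ℤ) ^ (f - 1 - j)) f]
    exact Finset.sum_congr rfl fun j _ => by rw [hc]; ring
  have hposS : ∀ j : ℕ, (0 : ℤ) < (p : ℤ) ^ (f - 1 - j) := fun j => by positivity
  have hub : ∀ j : ℕ, c j ≤ (p : ℤ) - 1 := fun j => by
    have h1 := ha (t + (j : ZMod f) + 1); have h2 := ha (u + (j : ZMod f) + 1)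
    simp only [hc]; omega
  have hlb : ∀ j : ℕ, -((p : ℤ) - 1) ≤ c j := fun j => by
    have h1 := ha (t + (j : ZMod f) + 1); have h2 := ha (u + (j : ZMod f) + 1)
    simp only [hc]; omega
  have hi0le : a i0 ≤ (p : ℤ) - 1 := by have := (ha i0).2; omega
  -- geometric sum computation
  have hgeom : ∑ j ∈ Finset.range f, ((p : ℤ) - 1) * (p : ℤ) ^ (f - 1 - j) = (p : ℤ) ^ f - 1 := by
    rw [← Finset.mul_sum, Finset.sum_range_reflect (fun j => (p : ℤ) ^ j) f, mul_comm,
      geom_sum_mul]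
  -- the two strict inequalities
  set j0 : ℕ := (i0 - t - 1).val with hj0def
  have hj0lt : j0 < f := ZMod.val_lt _
  have hj0cast : ((j0 : ℕ) : ZMod f) = i0 - t - 1 := ZMod.natCast_rightInverse _
  have hcj0 : c j0 < (p : ℤ) - 1 := by
    have e1 : t + (j0 : ZMod f) + 1 = i0 := by rw [hj0cast]; ring
    have h2 := ha (u + (j0 : ZMod f) + 1)
    simp only [hc, e1]; omega
  set j1 : ℕ := (i0 - u - 1).val with hj1def
  have hj1lt : j1 < f := ZMod.val_lt _
  have hj1cast : ((j1 : ℕ) : ZMod f) = i0 - u - 1 := ZMod.natCast_rightInverse _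
  have hcj1 : -((p : ℤ) - 1) < c j1 := by
    have e1 : u + (j1 : ZMod f) + 1 = i0 := by rw [hj1cast]; ring
    have h2 := ha (t + (j1 : ZMod f) + 1)
    simp only [hc, e1]; omega
  have hlt : n t - n u < (p : ℤ) ^ f - 1 := by
    rw [hsum, ← hgeom]
    exact Finset.sum_lt_sum (fun j _ => mul_le_mul_of_nonneg_right (hub j) (hposS j).le)
      ⟨j0, Finset.mem_range.2 hj0lt, mul_lt_mul_of_pos_right hcj0 (hposS j0)⟩
  have hgt : -((p : ℤ) ^ f - 1) < n t - n u := by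
    have hgeom' : ∑ j ∈ Finset.range f, (-((p : ℤ) - 1)) * (p : ℤ) ^ (f - 1 - j)
        = -((p : ℤ) ^ f - 1) := by
      rw [← hgeom, ← Finset.sum_neg_distrib]
      exact Finset.sum_congr rfl fun j _ => by ring
    rw [hsum, ← hgeom']
    exact Finset.sum_lt_sum (fun j _ => mul_le_mul_of_nonneg_right (hlb j) (hposS j).le)
      ⟨j1, Finset.mem_range.2 hj1lt, mul_lt_mul_of_pos_right hcj1 (hposS j1)⟩
  have h0 : n t - n u = 0 := Int.eq_zero_of_abs_lt_dvd hcong (abs_lt.2 ⟨hgt, hlt⟩)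
  have hz : ∑ j ∈ Finset.range f, c j * (p : ℤ) ^ (f - 1 - j) = 0 := by rw [← hsum, h0]
  -- reflect to standard digit form
  set d : ℕ → ℤ := fun e => c (f - 1 - e) with hd
  have hdabs : ∀ e, |d e| < (p : ℤ) := fun e => abs_lt.2 ⟨by have := hlb (f - 1 - e); simp only [hd]; omega,
    by have := hub (f - 1 - e); simp only [hd]; omega⟩
  have hrefl : ∑ e ∈ Finset.range f, d e * (p : ℤ) ^ e = 0 := by
    rw [← Finset.sum_range_reflect (fun e => d e * (p : ℤ) ^ e) f, ← hz]
    refine Finset.sum_congr rfl fun j hj => ?_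
    have hj' : f - 1 - (f - 1 - j) = j := by have := Finset.mem_range.1 hj; omega
    simp only [hd, hj']
  have hall := digits_unique (p : ℤ) (by omega) f d hdabs hrefl
  have hcz : ∀ j, j < f → c j = 0 := fun j hj => by
    have h1 : f - 1 - (f - 1 - j) = j := by omega
    have := hall (f - 1 - j) (by omega)
    simpa only [hd, h1] using this
  intro i
  have hjlt : (i - u - 1).val < f := ZMod.val_lt _
  have hjc : (((i - u - 1).val : ℕ) : ZMod f) = i - u - 1 := ZMod.natCast_rightInverse _
  have hgoal := hcz _ hjlt
  have e1 : t + (((i - u - 1).val : ℕ) : ZMod f) + 1 = i + (t - u) := by rw [hjc]; ring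
  have e2 : u + (((i - u - 1).val : ℕ) : ZMod f) + 1 = i := by rw [hjc]; ring
  simp only [hc, e1, e2] at hgoal
  linarith
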